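/- Let S be a commutative semiring and H a Hopf S-semialgebra. Then H admits a normalized left integral in H (an element x ∈ H with h·x = ε(h)·x for all h ∈ H and ε(x) = 1_S) if and only if H is separable, i.e., there exists e = Σ e^1 ⊗ e^2 ∈ H ⊗_S H such that Σ h·e^1 ⊗ e^2 = Σ e^1 ⊗ e^2·h for all h ∈ H and Σ e^1·e^2 = 1_H. -/

import Mathlib

/-!
STATEMENT 14: Let `S` be a commutative semiring and `H` a Hopf
`S`-semialgebra.  Then `H` admits a normalized left integral in `H`
(an `x : H` with `h * x = ε h • x` for all `h` and `ε x = 1`) if and only if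
`H` is separable, i.e. there is a Casimir element `e ∈ H ⊗[S] H` with
`Σ h·e¹ ⊗ e² = Σ e¹ ⊗ e²·h` for all `h` and `Σ e¹·e² = 1`.
-/

open TensorProduct

open LinearMap

namespace HopfSep
variable {S : Type*} [CommSemiring S] {H : Type*} [Semiring H] [HopfAlgebra S H]
open Coalgebra HopfAlgebra

noncomputable def Δ₂ : H ⊗[S] H →ₗ[S] (H ⊗[S] H) ⊗[S] (H ⊗[S] H) :=
  (tensorTensorTensorComm S H H H H).toLinearMap ∘ₗ map Coalgebra.comul Coalgebra.comul

noncomputable def u₂ : H ⊗[S] H →ₗ[S] H :=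
  Algebra.linearMap S H ∘ₗ (TensorProduct.lid S S).toLinearMap ∘ₗ
    map Coalgebra.counit Coalgebra.counit

noncomputable def conv (f g : H ⊗[S] H →ₗ[S] H) : H ⊗[S] H →ₗ[S] H :=
  mul' S H ∘ₗ map f g ∘ₗ Δ₂

lemma tttc_nat {A B C D A' B' C' D' : Type*} [AddCommMonoid A] [AddCommMonoid B] [AddCommMonoid C]
    [AddCommMonoid D] [AddCommMonoid A'] [AddCommMonoid B'] [AddCommMonoid C'] [AddCommMonoid D']
    [Module S A] [Module S B] [Module S C] [Module S D]
    [Module S A'] [Module S B'] [Module S C'] [Module S D']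
    (f : A →ₗ[S] A') (g : B →ₗ[S] B') (h : C →ₗ[S] C') (k : D →ₗ[S] D') :
    (tensorTensorTensorComm S A' B' C' D').toLinearMap ∘ₗ map (map f g) (map h k) =
      map (map f h) (map g k) ∘ₗ (tensorTensorTensorComm S A B C D).toLinearMap := by
  ext a b c d; simp

lemma coassocH : map (Coalgebra.comul (R:=S) (A:=H)) LinearMap.id ∘ₗ Coalgebra.comul =
    (TensorProduct.assoc S H H H).symm.toLinearMap ∘ₗ
      map LinearMap.id Coalgebra.comul ∘ₗ Coalgebra.comul := by
  ext a; exact (Coalgebra.coassoc_symm_apply (R := S) a).symm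

lemma coassoc₂ :
    (TensorProduct.assoc S (H ⊗[S] H) (H ⊗[S] H) (H ⊗[S] H)).toLinearMap ∘ₗ
      map Δ₂ LinearMap.id ∘ₗ Δ₂ =
    map LinearMap.id Δ₂ ∘ₗ Δ₂ := by
  set Δ := (Coalgebra.comul (R:=S) (A:=H))
  set tt := (tensorTensorTensorComm S H H H H).toLinearMap
  have e1 : (map (Δ₂ (S:=S) (H:=H)) LinearMap.id) ∘ₗ tt =
      map tt LinearMap.id ∘ₗ
        ((tensorTensorTensorComm S (H ⊗[S] H) H (H ⊗[S] H) H).toLinearMap ∘ₗ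
          map (map Δ LinearMap.id) (map Δ LinearMap.id)) := by
    rw [tttc_nat]
    rw [show (map (Δ₂ (S:=S) (H:=H)) LinearMap.id) =
      map tt LinearMap.id ∘ₗ map (map Δ Δ) (map LinearMap.id LinearMap.id) by
        rw [map_id, ← TensorProduct.map_comp]; rfl]
    rw [LinearMap.comp_assoc]
  have e2 : (map LinearMap.id (Δ₂ (S:=S) (H:=H))) ∘ₗ tt =
      map LinearMap.id tt ∘ₗ
        ((tensorTensorTensorComm S H (H ⊗[S] H) H (H ⊗[S] H)).toLinearMap ∘ₗ
          map (map LinearMap.id Δ) (map LinearMap.id Δ)) := by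
    rw [tttc_nat]
    rw [show (map LinearMap.id (Δ₂ (S:=S) (H:=H))) =
      map LinearMap.id tt ∘ₗ map (map LinearMap.id LinearMap.id) (map Δ Δ) by
        rw [map_id, ← TensorProduct.map_comp]; rfl]
    rw [LinearMap.comp_assoc]
  have shuffle :
      (TensorProduct.assoc S (H ⊗[S] H) (H ⊗[S] H) (H ⊗[S] H)).toLinearMap ∘ₗ
        map tt LinearMap.id ∘ₗ
        (tensorTensorTensorComm S (H ⊗[S] H) H (H ⊗[S] H) H).toLinearMap ∘ₗ
        map (TensorProduct.assoc S H H H).symm.toLinearMap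
          (TensorProduct.assoc S H H H).symm.toLinearMap =
      map LinearMap.id tt ∘ₗ
        (tensorTensorTensorComm S H (H ⊗[S] H) H (H ⊗[S] H)).toLinearMap := by
    ext a c e b d f; simp [tt]
  show (TensorProduct.assoc S (H ⊗[S] H) (H ⊗[S] H) (H ⊗[S] H)).toLinearMap ∘ₗ
      map Δ₂ LinearMap.id ∘ₗ (tt ∘ₗ map Δ Δ) = map LinearMap.id Δ₂ ∘ₗ (tt ∘ₗ map Δ Δ)
  rw [← LinearMap.comp_assoc (map Δ Δ) tt (map LinearMap.id Δ₂), e2]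
  rw [← LinearMap.comp_assoc (map Δ Δ) tt (map Δ₂ LinearMap.id),
      ← LinearMap.comp_assoc, e1]
  simp only [LinearMap.comp_assoc]
  rw [← TensorProduct.map_comp, ← TensorProduct.map_comp]
  rw [show (map Δ LinearMap.id ∘ₗ Δ : H →ₗ[S] _) =
        (TensorProduct.assoc S H H H).symm.toLinearMap ∘ₗ
          (map LinearMap.id Δ ∘ₗ Δ) from by rw [coassocH]]
  rw [show (map ((TensorProduct.assoc S H H H).symm.toLinearMap ∘ₗ (map LinearMap.id Δ ∘ₗ Δ))
        ((TensorProduct.assoc S H H H).symm.toLinearMap ∘ₗ (map LinearMap.id Δ ∘ₗ Δ))) =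
      map (TensorProduct.assoc S H H H).symm.toLinearMap
        (TensorProduct.assoc S H H H).symm.toLinearMap ∘ₗ
        map (map LinearMap.id Δ ∘ₗ Δ) (map LinearMap.id Δ ∘ₗ Δ) from
      (TensorProduct.map_comp _ _ _ _)]
  rw [TensorProduct.map_comp (map LinearMap.id Δ) (map LinearMap.id Δ) Δ Δ]
  simp only [← LinearMap.comp_assoc] at shuffle ⊢
  rw [shuffle]

lemma mul_assoc_map :
    ((mul' S H) ∘ₗ map (mul' S H) LinearMap.id : (H ⊗[S] H) ⊗[S] H →ₗ[S] H) =
      mul' S H ∘ₗ map LinearMap.id (mul' S H) ∘ₗ (TensorProduct.assoc S H H H).toLinearMap := by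
  apply TensorProduct.ext_threefold; intro a b c; simp [mul_assoc]

lemma assoc_nat {A B C A' B' C' : Type*} [AddCommMonoid A] [AddCommMonoid B] [AddCommMonoid C]
    [AddCommMonoid A'] [AddCommMonoid B'] [AddCommMonoid C']
    [Module S A] [Module S B] [Module S C] [Module S A'] [Module S B'] [Module S C']
    (f : A →ₗ[S] A') (g : B →ₗ[S] B') (h : C →ₗ[S] C') :
    (TensorProduct.assoc S A' B' C').toLinearMap ∘ₗ map (map f g) h =
      map f (map g h) ∘ₗ (TensorProduct.assoc S A B C).toLinearMap := by
  apply TensorProduct.ext_threefold; intro a b c; simp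

lemma conv_assoc (f g k : H ⊗[S] H →ₗ[S] H) : conv (conv f g) k = conv f (conv g k) := by
  have h1 : map (mul' S H ∘ₗ map f g ∘ₗ Δ₂) k =
      map (mul' S H) LinearMap.id ∘ₗ map (map f g) k ∘ₗ map Δ₂ LinearMap.id := by
    rw [← TensorProduct.map_comp, ← TensorProduct.map_comp]; simp
  have h2 : map f (mul' S H ∘ₗ map g k ∘ₗ Δ₂) =
      map LinearMap.id (mul' S H) ∘ₗ map f (map g k) ∘ₗ map LinearMap.id Δ₂ := by
    rw [← TensorProduct.map_comp, ← TensorProduct.map_comp]; simp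
  apply LinearMap.ext; intro t
  have l1 := LinearMap.congr_fun h1 (Δ₂ t)
  have l2 := LinearMap.congr_fun h2 (Δ₂ t)
  simp only [coe_comp, Function.comp_apply] at l1 l2
  show mul' S H (map (conv f g) k (Δ₂ t)) = mul' S H (map f (conv g k) (Δ₂ t))
  unfold conv
  rw [l1, l2]
  have m1 := LinearMap.congr_fun (mul_assoc_map (S:=S) (H:=H))
    (map (map f g) k (map Δ₂ LinearMap.id (Δ₂ t)))
  simp only [coe_comp, Function.comp_apply, LinearEquiv.coe_coe] at m1
  rw [m1]
  have m2 := LinearMap.congr_fun (assoc_nat (S:=S) f g k) (map Δ₂ LinearMap.id (Δ₂ t))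
  simp only [coe_comp, Function.comp_apply, LinearEquiv.coe_coe] at m2
  rw [m2]
  have m3 := LinearMap.congr_fun (coassoc₂ (S:=S) (H:=H)) t
  simp only [coe_comp, Function.comp_apply, LinearEquiv.coe_coe] at m3
  rw [m3]

lemma sum_smul_left {a : H} (r : Coalgebra.Repr S a (H × H)) :
    ∑ i ∈ r.index, Coalgebra.counit (R := S) (r.right i) • r.left i = a := by
  have h2 := congrArg (TensorProduct.rid S H) (Coalgebra.sum_tmul_counit_eq (R := S) r)
  rw [map_sum] at h2
  simp only [TensorProduct.rid_tmul, one_smul] at h2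
  exact h2

lemma sum_smul_right {a : H} (r : Coalgebra.Repr S a (H × H)) :
    ∑ i ∈ r.index, Coalgebra.counit (R := S) (r.left i) • r.right i = a := by
  have h2 := congrArg (TensorProduct.lid S H) (Coalgebra.sum_counit_tmul_eq (R := S) r)
  rw [map_sum] at h2
  simp only [TensorProduct.lid_tmul, one_smul] at h2
  exact h2

lemma smul_smul_tmul (s t : S) (u v : H) :
    (s * t) • (u ⊗ₜ[S] v) = (s • u) ⊗ₜ[S] (t • v) := by
  rw [mul_smul, ← tmul_smul, smul_tmul']

lemma Δ₂_tmul (a b : H) (ra : Coalgebra.Repr S a (H × H)) (rb : Coalgebra.Repr S b (H × H)) :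
    Δ₂ (a ⊗ₜ[S] b) = ∑ i ∈ ra.index, ∑ j ∈ rb.index,
      (ra.left i ⊗ₜ[S] rb.left j) ⊗ₜ[S] (ra.right i ⊗ₜ[S] rb.right j) := by
  have h0 : Δ₂ (a ⊗ₜ[S] b) =
      (tensorTensorTensorComm S H H H H) (Coalgebra.comul a ⊗ₜ[S] Coalgebra.comul b) := rfl
  rw [h0, ← ra.eq, ← rb.eq, TensorProduct.sum_tmul, map_sum]
  refine Finset.sum_congr rfl fun i _ => ?_
  rw [TensorProduct.tmul_sum, map_sum]
  exact Finset.sum_congr rfl fun j _ => by simp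

lemma u₂_tmul (a b : H) : u₂ (a ⊗ₜ[S] b) =
    algebraMap S H (Coalgebra.counit (R := S) a * Coalgebra.counit (R := S) b) := by
  simp [u₂, smul_eq_mul]

lemma conv_unit_right (f : H ⊗[S] H →ₗ[S] H) : conv f u₂ = f := by
  apply TensorProduct.ext'
  intro a b
  have ra := Coalgebra.Repr.arbitrary S a
  have rb := Coalgebra.Repr.arbitrary S b
  show mul' S H (map f u₂ (Δ₂ (a ⊗ₜ[S] b))) = f (a ⊗ₜ[S] b)
  rw [Δ₂_tmul a b ra rb, map_sum, map_sum]
  calc ∑ i ∈ ra.index, mul' S H (map f u₂ (∑ j ∈ rb.index,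
        (ra.left i ⊗ₜ[S] rb.left j) ⊗ₜ[S] (ra.right i ⊗ₜ[S] rb.right j)))
      = ∑ i ∈ ra.index, ∑ j ∈ rb.index,
        f ((Coalgebra.counit (R := S) (ra.right i) • ra.left i) ⊗ₜ[S]
           (Coalgebra.counit (R := S) (rb.right j) • rb.left j)) := by
        refine Finset.sum_congr rfl fun i hi => ?_
        rw [map_sum, map_sum]
        refine Finset.sum_congr rfl fun j hj => ?_
        rw [map_tmul, mul'_apply, u₂_tmul, ← Algebra.commutes, ← Algebra.smul_def,
          ← map_smul, smul_smul_tmul]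
    _ = f (a ⊗ₜ[S] b) := by
        simp_rw [← map_sum, ← TensorProduct.tmul_sum]
        rw [sum_smul_left rb, ← TensorProduct.sum_tmul, sum_smul_left ra]

lemma conv_unit_left (f : H ⊗[S] H →ₗ[S] H) : conv u₂ f = f := by
  apply TensorProduct.ext'
  intro a b
  have ra := Coalgebra.Repr.arbitrary S a
  have rb := Coalgebra.Repr.arbitrary S b
  show mul' S H (map u₂ f (Δ₂ (a ⊗ₜ[S] b))) = f (a ⊗ₜ[S] b)
  rw [Δ₂_tmul a b ra rb, map_sum, map_sum]
  calc ∑ i ∈ ra.index, mul' S H (map u₂ f (∑ j ∈ rb.index,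
        (ra.left i ⊗ₜ[S] rb.left j) ⊗ₜ[S] (ra.right i ⊗ₜ[S] rb.right j)))
      = ∑ i ∈ ra.index, ∑ j ∈ rb.index,
        f ((Coalgebra.counit (R := S) (ra.left i) • ra.right i) ⊗ₜ[S]
           (Coalgebra.counit (R := S) (rb.left j) • rb.right j)) := by
        refine Finset.sum_congr rfl fun i hi => ?_
        rw [map_sum, map_sum]
        refine Finset.sum_congr rfl fun j hj => ?_
        rw [map_tmul, mul'_apply, u₂_tmul, ← Algebra.smul_def,
          ← map_smul, smul_smul_tmul]
    _ = f (a ⊗ₜ[S] b) := by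
        simp_rw [← map_sum, ← TensorProduct.tmul_sum]
        rw [sum_smul_right rb, ← TensorProduct.sum_tmul, sum_smul_right ra]

lemma mulmul (u v : H ⊗[S] H) :
    map (mul' S H) (mul' S H) ((tensorTensorTensorComm S H H H H) (u ⊗ₜ[S] v)) = u * v := by
  induction u using TensorProduct.induction_on with
  | zero => simp [TensorProduct.zero_tmul]
  | tmul a b =>
    induction v using TensorProduct.induction_on with
    | zero => simp [TensorProduct.tmul_zero]
    | tmul c d => simp [Algebra.TensorProduct.tmul_mul_tmul]
    | add v1 v2 h1 h2 => simp only [TensorProduct.tmul_add, map_add, h1, h2, mul_add]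
  | add u1 u2 h1 h2 => simp only [TensorProduct.add_tmul, map_add, h1, h2, add_mul]

lemma conv_rho_mu :
    conv (HopfAlgebra.antipode (R := S) ∘ₗ mul' S H) (mul' S H) = (u₂ : H ⊗[S] H →ₗ[S] H) := by
  apply TensorProduct.ext'
  intro a b
  show mul' S H (map (HopfAlgebra.antipode (R := S) ∘ₗ mul' S H) (mul' S H) (Δ₂ (a ⊗ₜ[S] b)))
      = u₂ (a ⊗ₜ[S] b)
  have hm : map (HopfAlgebra.antipode (R := S) ∘ₗ mul' S H) (mul' S H) =
      map (HopfAlgebra.antipode (R := S)) LinearMap.id ∘ₗ map (mul' S H) (mul' S H) := by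
    rw [← TensorProduct.map_comp]; simp
  rw [hm]
  simp only [coe_comp, Function.comp_apply]
  have hmm : map (mul' S H) (mul' S H) (Δ₂ (a ⊗ₜ[S] b)) = Coalgebra.comul (a * b) := by
    have h0 : Δ₂ (a ⊗ₜ[S] b) = (tensorTensorTensorComm S H H H H)
        (Coalgebra.comul a ⊗ₜ[S] Coalgebra.comul b) := rfl
    rw [h0, mulmul, ← Bialgebra.comul_mul]
  rw [hmm]
  rw [show (map (HopfAlgebra.antipode (R := S)) (LinearMap.id) : H ⊗[S] H →ₗ[S] H ⊗[S] H) =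
    (HopfAlgebra.antipode (R := S)).rTensor H from rfl]
  rw [HopfAlgebra.mul_antipode_rTensor_comul_apply, u₂_tmul, Bialgebra.counit_mul]

lemma conv_mu_nu :
    conv (mul' S H) (mul' S H ∘ₗ map (HopfAlgebra.antipode (R := S))
      (HopfAlgebra.antipode (R := S)) ∘ₗ (TensorProduct.comm S H H).toLinearMap) = u₂ := by
  apply TensorProduct.ext'
  intro a b
  have ra := Coalgebra.Repr.arbitrary S a
  have rb := Coalgebra.Repr.arbitrary S b
  set ν := mul' S H ∘ₗ map (HopfAlgebra.antipode (R := S))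
      (HopfAlgebra.antipode (R := S)) ∘ₗ (TensorProduct.comm S H H).toLinearMap with hν
  show mul' S H (map (mul' S H) ν (Δ₂ (a ⊗ₜ[S] b))) = u₂ (a ⊗ₜ[S] b)
  have hνap : ∀ u v : H, ν (u ⊗ₜ[S] v) =
      HopfAlgebra.antipode (R := S) v * HopfAlgebra.antipode (R := S) u := by
    intro u v; simp [hν]
  rw [Δ₂_tmul a b ra rb, map_sum, map_sum]
  calc ∑ i ∈ ra.index, mul' S H (map (mul' S H) ν (∑ j ∈ rb.index,
        (ra.left i ⊗ₜ[S] rb.left j) ⊗ₜ[S] (ra.right i ⊗ₜ[S] rb.right j)))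
      = ∑ i ∈ ra.index, ∑ j ∈ rb.index,
        ra.left i * ((rb.left j * HopfAlgebra.antipode (R := S) (rb.right j)) *
          HopfAlgebra.antipode (R := S) (ra.right i)) := by
        refine Finset.sum_congr rfl fun i hi => ?_
        rw [map_sum, map_sum]
        refine Finset.sum_congr rfl fun j hj => ?_
        rw [map_tmul, mul'_apply, hνap, mul'_apply]
        rw [mul_assoc, ← mul_assoc (rb.left j)]
    _ = ∑ i ∈ ra.index,
        Coalgebra.counit (R := S) b • (ra.left i * HopfAlgebra.antipode (R := S) (ra.right i)) := by
        refine Finset.sum_congr rfl fun i hi => ?_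
        rw [← Finset.mul_sum, ← Finset.sum_mul, HopfAlgebra.sum_mul_antipode_eq_smul,
          smul_mul_assoc, one_mul, mul_smul_comm]
    _ = u₂ (a ⊗ₜ[S] b) := by
        rw [← Finset.smul_sum, HopfAlgebra.sum_mul_antipode_eq_smul, u₂_tmul,
          smul_smul, mul_comm (Coalgebra.counit (R := S) b), Algebra.algebraMap_eq_smul_one]

theorem antipode_mul (a b : H) :
    HopfAlgebra.antipode (R := S) (a * b) =
      HopfAlgebra.antipode (R := S) b * HopfAlgebra.antipode (R := S) a := by
  set ρ : H ⊗[S] H →ₗ[S] H := HopfAlgebra.antipode (R := S) ∘ₗ mul' S H with hρ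
  set ν : H ⊗[S] H →ₗ[S] H := mul' S H ∘ₗ map (HopfAlgebra.antipode (R := S))
      (HopfAlgebra.antipode (R := S)) ∘ₗ (TensorProduct.comm S H H).toLinearMap with hν
  have hρν : ρ = ν := by
    calc ρ = conv ρ u₂ := (conv_unit_right ρ).symm
      _ = conv ρ (conv (mul' S H) ν) := by rw [conv_mu_nu]
      _ = conv (conv ρ (mul' S H)) ν := (conv_assoc _ _ _).symm
      _ = conv u₂ ν := by rw [hρ, conv_rho_mu]
      _ = ν := conv_unit_left ν
  have h := DFunLike.congr_fun hρν (a ⊗ₜ[S] b)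
  simpa [hρ, hν] using h

noncomputable def Λmap : (H ⊗[S] H) ⊗[S] H →ₗ[S] H ⊗[S] H :=
  map LinearMap.id (mul' S H) ∘ₗ (TensorProduct.assoc S H H H).toLinearMap ∘ₗ
    map (map LinearMap.id (HopfAlgebra.antipode (R := S))) LinearMap.id

lemma Λmap_tmul (u v w : H) :
    Λmap ((u ⊗ₜ[S] v) ⊗ₜ[S] w) = u ⊗ₜ[S] (HopfAlgebra.antipode (R := S) v * w) := by
  simp [Λmap]

lemma step1 (t : H ⊗[S] H) (w : H) :
    Λmap (t ⊗ₜ[S] w) =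
      map LinearMap.id (mulRight S w) (map LinearMap.id (HopfAlgebra.antipode (R := S)) t) := by
  induction t using TensorProduct.induction_on with
  | zero => simp [TensorProduct.zero_tmul]
  | tmul u v => rw [Λmap_tmul]; simp
  | add t1 t2 h1 h2 => rw [TensorProduct.add_tmul, map_add, h1, h2, map_add, map_add]

noncomputable def Wmap (eel : H ⊗[S] H) : H ⊗[S] H →ₗ[S] H ⊗[S] H :=
  map (mul' S H) (mul' S H) ∘ₗ map LinearMap.id (TensorProduct.comm S H H).toLinearMap ∘ₗ
    (tensorTensorTensorComm S H H H H).toLinearMap ∘ₗ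
    ((TensorProduct.mk S (H ⊗[S] H) (H ⊗[S] H)).flip eel)

lemma Wmap_tmul (eel : H ⊗[S] H) (g s : H) :
    Wmap eel (g ⊗ₜ[S] s) = map (mulLeft S g) (mulRight S s) eel := by
  induction eel using TensorProduct.induction_on with
  | zero => simp [Wmap]
  | tmul u v => simp [Wmap, mul_comm]
  | add e1 e2 h1 h2 =>
    simp only [map_add]
    rw [← h1, ← h2]
    simp [Wmap, TensorProduct.tmul_add]

noncomputable def τmap (eel : H ⊗[S] H) : H ⊗[S] (H ⊗[S] H) →ₗ[S] H ⊗[S] H :=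
  Wmap eel ∘ₗ map LinearMap.id (mul' S H ∘ₗ map (HopfAlgebra.antipode (R := S)) LinearMap.id)

lemma τmap_tmul (eel : H ⊗[S] H) (g c w : H) :
    τmap eel (g ⊗ₜ[S] (c ⊗ₜ[S] w)) =
      Wmap eel (g ⊗ₜ[S] (HopfAlgebra.antipode (R := S) c * w)) := by
  simp [τmap]

lemma C3' (t : H ⊗[S] H) (g₁ g₂ w : H) :
    Λmap (((g₁ ⊗ₜ[S] g₂) * t) ⊗ₜ[S] w) =
      map (mulLeft S g₁) (mulRight S (HopfAlgebra.antipode (R := S) g₂ * w))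
        (map LinearMap.id (HopfAlgebra.antipode (R := S)) t) := by
  induction t using TensorProduct.induction_on with
  | zero => simp [TensorProduct.zero_tmul]
  | tmul c d =>
    rw [Algebra.TensorProduct.tmul_mul_tmul, Λmap_tmul, antipode_mul]
    simp [mul_assoc]
  | add t1 t2 h1 h2 =>
    rw [mul_add, TensorProduct.add_tmul, map_add, h1, h2, map_add, map_add]

lemma K1 (x : H) (hx : ∀ h : H, h * x = Coalgebra.counit (R := S) h • x) (h : H)
    (rh : Coalgebra.Repr S h (H × H)) :
    (Coalgebra.comul (R := S) x) ⊗ₜ[S] h =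
      ∑ k ∈ rh.index, Coalgebra.comul (R := S) (rh.left k * x) ⊗ₜ[S] rh.right k := by
  have : ∀ k, Coalgebra.comul (R := S) (rh.left k * x) ⊗ₜ[S] rh.right k =
      Coalgebra.counit (R := S) (rh.left k) •
        ((Coalgebra.comul (R := S) x) ⊗ₜ[S] rh.right k) := by
    intro k
    rw [hx (rh.left k), map_smul, smul_tmul']
  rw [Finset.sum_congr rfl fun k _ => this k]
  simp_rw [← tmul_smul]
  rw [← TensorProduct.tmul_sum, sum_smul_right rh]

lemma casimir (x : H) (hx : ∀ h : H, h * x = Coalgebra.counit (R := S) h • x) (h : H) :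
    map (mulLeft S h) LinearMap.id
        (map LinearMap.id (HopfAlgebra.antipode (R := S)) (Coalgebra.comul x)) =
      map LinearMap.id (mulRight S h)
        (map LinearMap.id (HopfAlgebra.antipode (R := S)) (Coalgebra.comul x)) := by
  have rh := Coalgebra.Repr.arbitrary S h
  let rl : (k : H × H) → Coalgebra.Repr S (rh.left k) (H × H) :=
    fun k => Coalgebra.Repr.arbitrary S (rh.left k)
  let rr : (k : H × H) → Coalgebra.Repr S (rh.right k) (H × H) :=
    fun k => Coalgebra.Repr.arbitrary S (rh.right k)
  have mul_right_one : mulRight S (1 : H) = LinearMap.id := by ext y; simp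
  calc map (mulLeft S h) LinearMap.id
        (map LinearMap.id (HopfAlgebra.antipode (R := S)) (Coalgebra.comul x))
      = Wmap (map LinearMap.id (HopfAlgebra.antipode (R := S)) (Coalgebra.comul x))
          (h ⊗ₜ[S] 1) := by rw [Wmap_tmul, mul_right_one]
    _ = Wmap (map LinearMap.id (HopfAlgebra.antipode (R := S)) (Coalgebra.comul x))
          ((∑ k ∈ rh.index, Coalgebra.counit (R := S) (rh.right k) • rh.left k) ⊗ₜ[S] 1) := by
        rw [sum_smul_left rh]
    _ = ∑ k ∈ rh.index, Coalgebra.counit (R := S) (rh.right k) •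
          Wmap (map LinearMap.id (HopfAlgebra.antipode (R := S)) (Coalgebra.comul x))
            (rh.left k ⊗ₜ[S] 1) := by
        rw [TensorProduct.sum_tmul, map_sum]
        exact Finset.sum_congr rfl fun k _ => by rw [← smul_tmul', map_smul]
    _ = ∑ k ∈ rh.index,
          Wmap (map LinearMap.id (HopfAlgebra.antipode (R := S)) (Coalgebra.comul x))
            (rh.left k ⊗ₜ[S] (Coalgebra.counit (R := S) (rh.right k) • 1)) := by
        exact Finset.sum_congr rfl fun k _ => by rw [tmul_smul, map_smul]
    _ = ∑ k ∈ rh.index, ∑ m ∈ (rr k).index,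
          Wmap (map LinearMap.id (HopfAlgebra.antipode (R := S)) (Coalgebra.comul x))
            (rh.left k ⊗ₜ[S]
              (HopfAlgebra.antipode (R := S) ((rr k).left m) * (rr k).right m)) := by
        refine Finset.sum_congr rfl fun k _ => ?_
        rw [← HopfAlgebra.sum_antipode_mul_eq_smul (rr k), TensorProduct.tmul_sum, map_sum]
    _ = ∑ k ∈ rh.index, ∑ m ∈ (rr k).index,
          τmap (map LinearMap.id (HopfAlgebra.antipode (R := S)) (Coalgebra.comul x))
            (rh.left k ⊗ₜ[S] ((rr k).left m ⊗ₜ[S] (rr k).right m)) := by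
        exact Finset.sum_congr rfl fun k _ => Finset.sum_congr rfl fun m _ =>
          (τmap_tmul _ _ _ _).symm
    _ = τmap (map LinearMap.id (HopfAlgebra.antipode (R := S)) (Coalgebra.comul x))
          (∑ k ∈ rh.index, ∑ m ∈ (rr k).index,
            rh.left k ⊗ₜ[S] ((rr k).left m ⊗ₜ[S] (rr k).right m)) := by
        rw [map_sum]
        exact Finset.sum_congr rfl fun k _ => (map_sum _ _ _).symm
    _ = τmap (map LinearMap.id (HopfAlgebra.antipode (R := S)) (Coalgebra.comul x))
          (∑ k ∈ rh.index, ∑ m ∈ (rl k).index,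
            (rl k).left m ⊗ₜ[S] ((rl k).right m ⊗ₜ[S] rh.right k)) := by
        rw [Coalgebra.sum_tmul_tmul_eq rh rl rr]
    _ = ∑ k ∈ rh.index, ∑ m ∈ (rl k).index,
          Wmap (map LinearMap.id (HopfAlgebra.antipode (R := S)) (Coalgebra.comul x))
            ((rl k).left m ⊗ₜ[S]
              (HopfAlgebra.antipode (R := S) ((rl k).right m) * rh.right k)) := by
        rw [map_sum]
        exact Finset.sum_congr rfl fun k _ => by
          rw [map_sum]
          exact Finset.sum_congr rfl fun m _ => τmap_tmul _ _ _ _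
    _ = ∑ k ∈ rh.index,
          Λmap ((Coalgebra.comul (R := S) (rh.left k) * Coalgebra.comul (R := S) x)
            ⊗ₜ[S] rh.right k) := by
        refine Finset.sum_congr rfl fun k _ => ?_
        rw [← (rl k).eq, Finset.sum_mul, TensorProduct.sum_tmul, map_sum]
        exact Finset.sum_congr rfl fun m _ => by rw [C3', Wmap_tmul]
    _ = ∑ k ∈ rh.index, Λmap (Coalgebra.comul (R := S) (rh.left k * x) ⊗ₜ[S] rh.right k) := by
        exact Finset.sum_congr rfl fun k _ => by rw [Bialgebra.comul_mul]
    _ = Λmap (Coalgebra.comul (R := S) x ⊗ₜ[S] h) := by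
        rw [K1 x hx h rh, map_sum]
    _ = map LinearMap.id (mulRight S h)
          (map LinearMap.id (HopfAlgebra.antipode (R := S)) (Coalgebra.comul x)) := step1 _ h

end HopfSep

open HopfSep in
theorem normalized_left_integral_iff_separable
    (S : Type*) [CommSemiring S] (H : Type*) [Semiring H] [HopfAlgebra S H] :
    (∃ x : H, (∀ h : H, h * x = Coalgebra.counit (R := S) h • x) ∧
        Coalgebra.counit (R := S) x = 1) ↔
      (∃ e : H ⊗[S] H,
        (∀ h : H,
          TensorProduct.map (LinearMap.mulLeft S h) LinearMap.id e =
            TensorProduct.map LinearMap.id (LinearMap.mulRight S h) e) ∧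
        LinearMap.mul' S H e = 1) := by
  constructor
  · rintro ⟨x, hx1, hx2⟩
    refine ⟨map LinearMap.id (HopfAlgebra.antipode (R := S)) (Coalgebra.comul x),
      fun h => casimir x hx1 h, ?_⟩
    have := HopfAlgebra.mul_antipode_lTensor_comul_apply (R := S) x
    rw [show ((HopfAlgebra.antipode (R := S)).lTensor H (Coalgebra.comul x)) =
      map LinearMap.id (HopfAlgebra.antipode (R := S)) (Coalgebra.comul x) from rfl] at this
    rw [this, hx2, map_one]
  · rintro ⟨e, he1, he2⟩
    refine ⟨TensorProduct.rid S H ((Coalgebra.counit (R := S)).lTensor H e), fun h => ?_, ?_⟩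
    · have l1 : ∀ (t : H ⊗[S] H),
          TensorProduct.rid S H ((Coalgebra.counit (R := S)).lTensor H
            (map (LinearMap.mulLeft S h) LinearMap.id t)) =
          h * TensorProduct.rid S H ((Coalgebra.counit (R := S)).lTensor H t) := by
        intro t
        induction t using TensorProduct.induction_on with
        | zero => simp
        | tmul u v => simp [mul_smul_comm]
        | add t1 t2 h1 h2 => simp only [map_add, h1, h2, mul_add]
      have l2 : ∀ (t : H ⊗[S] H),
          TensorProduct.rid S H ((Coalgebra.counit (R := S)).lTensor H
            (map LinearMap.id (LinearMap.mulRight S h) t)) =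
          Coalgebra.counit (R := S) h •
            TensorProduct.rid S H ((Coalgebra.counit (R := S)).lTensor H t) := by
        intro t
        induction t using TensorProduct.induction_on with
        | zero => simp
        | tmul u v => simp [Bialgebra.counit_mul, mul_comm, mul_smul]
        | add t1 t2 h1 h2 => simp only [map_add, h1, h2, smul_add]
      rw [← l1 e, he1 h, l2 e]
    · have l3 : ∀ (t : H ⊗[S] H),
          Coalgebra.counit (R := S)
            (TensorProduct.rid S H ((Coalgebra.counit (R := S)).lTensor H t)) =
          Coalgebra.counit (R := S) (LinearMap.mul' S H t) := by
        intro t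
        induction t using TensorProduct.induction_on with
        | zero => simp
        | tmul u v => simp [Bialgebra.counit_mul, mul_comm, smul_eq_mul]
        | add t1 t2 h1 h2 => simp only [map_add, h1, h2]
      rw [l3 e, he2, Bialgebra.counit_one]
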